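/- For an integer k ≥ 1, the congruence 18(k)_3 ≡ 2 (mod 208) holds if and only if k ≡ 29 (mod 52). -/

import Mathlib

private def aux208 : ℕ → ℕ
  | 0 => 0
  | n + 1 => (27 * aux208 n + 18) % 208

private lemma aux208_eq (k : ℕ) :
    (18 * ∑ i ∈ Finset.range k, 27 ^ i) % 208 = aux208 k := by
  induction k with
  | zero => simp [aux208]
  | succ n ih =>
    rw [geom_sum_succ, aux208, ← ih]
    have h2 : 27 * ((18 * ∑ i ∈ Finset.range n, 27 ^ i) % 208) + 18 ≡
        27 * (18 * ∑ i ∈ Finset.range n, 27 ^ i) + 18 [MOD 208] :=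
      ((Nat.mod_modEq _ 208).mul_left 27).add_right 18
    unfold Nat.ModEq at h2
    rw [h2]
    congr 1
    ring

set_option maxRecDepth 4000 in
private lemma aux208_period (k : ℕ) : aux208 (k + 52) = aux208 k := by
  induction k with
  | zero => decide
  | succ n ih => show aux208 (n + 52 + 1) = _; rw [aux208, ih, aux208]

private lemma aux208_mod (k : ℕ) : aux208 k = aux208 (k % 52) := by
  conv_lhs => rw [← Nat.div_add_mod k 52]
  induction k / 52 with
  | zero => simp
  | succ n ih =>
    rw [Nat.mul_succ, add_right_comm, aux208_period, ih]

set_option maxRecDepth 4000 in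
private lemma aux208_iff (r : ℕ) (h : r < 52) : aux208 r = 2 ↔ r = 29 := by
  revert h; revert r; decide

/-- 18(k)₃ ≡ 2 (mod 208) if and only if k ≡ 29 (mod 52). -/
theorem concat18_base3_mod208 (k : ℕ) (hk : 1 ≤ k) :
    18 * ∑ i ∈ Finset.range k, 27 ^ i ≡ 2 [MOD 208] ↔ k ≡ 29 [MOD 52] := by
  unfold Nat.ModEq
  rw [aux208_eq, aux208_mod]
  norm_num
  rw [aux208_iff _ (Nat.mod_lt _ (by norm_num))]
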